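/- In the same abstract eigenfunction setting, the smoothing estimate of order two is sharp in the following sense: for p > s + 2 there is no constant c and exponent γ such that ‖F(t)v‖_{Ḣ^p} ≤ c t^{-γ} ‖v‖_{Ḣ^s} holds for all v and all t ∈ (0,1], provided λ_j → ∞ and E_{α,1}(-x) ≥ c₀/(1+x) for x ≥ 0 with some c₀ > 0. -/

import Mathlib

open Filter

/-- The one-parameter Mittag-Leffler function `E_{α,1}(x) = ∑ x^k / Γ(kα+1)`. -/
noncomputable def ml (α x : ℝ) : ℝ := ∑' k : ℕ, x ^ k / Real.Gamma (k * α + 1)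

/-- Sharpness of the order-two smoothing: no estimate
`‖F(t)v‖_{Ḣ^p} ≤ C t^{-γ} ‖v‖_{Ḣ^s}` can hold uniformly for `t ∈ (0,1]` when `p > s + 2`,
stated in terms of the eigenfunction coefficients. -/
theorem stmt12 (α : ℝ) (hα0 : 0 < α) (hα1 : α < 1)
    (lam : ℕ → ℝ) (hlampos : ∀ j, 0 < lam j) (hlammono : Monotone lam)
    (hlamtop : Tendsto lam atTop atTop)
    (c₀ : ℝ) (hc₀ : 0 < c₀) (hE : ∀ x : ℝ, 0 ≤ x → c₀ / (1 + x) ≤ ml α (-x))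
    (p s : ℝ) (hps : s + 2 < p) :
    ¬ ∃ (C γ : ℝ), ∀ (v : ℕ → ℝ), (Summable fun j => (lam j) ^ s * (v j) ^ 2) →
        ∀ t ∈ Set.Ioc (0:ℝ) 1,
          (∑' j : ℕ, (lam j) ^ p * (ml α (-(lam j * t ^ α)) * v j) ^ 2) ≤
            (C * t ^ (-γ)) ^ 2 * ∑' j : ℕ, (lam j) ^ s * (v j) ^ 2 := by
  rintro ⟨C, γ, h⟩
  -- pick j with lam j ≥ 1 and lam j ^ (p - s - 2) big
  have hpow : Tendsto (fun j => (lam j) ^ (p - s - 2)) atTop atTop :=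
    (tendsto_rpow_atTop (by linarith)).comp hlamtop
  obtain ⟨j, hj1, hj2⟩ : ∃ j, 1 ≤ lam j ∧ 4 * C ^ 2 / c₀ ^ 2 < lam j ^ (p - s - 2) :=
    ((hlamtop.eventually_ge_atTop 1).and
      (hpow.eventually_gt_atTop (4 * C ^ 2 / c₀ ^ 2))).exists
  set L := lam j with hL
  have hL0 : 0 < L := hlampos j
  -- test function: indicator at j
  set v : ℕ → ℝ := fun i => if i = j then 1 else 0 with hv
  have hzero : ∀ i, i ≠ j → (lam i) ^ s * (v i) ^ 2 = 0 := by
    intro i hi; simp [hv, hi]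
  have hsum : Summable fun i => (lam i) ^ s * (v i) ^ 2 :=
    summable_of_ne_finset_zero (s := {j}) (by intro i hi; exact hzero i (by simpa using hi))
  have key := h v hsum 1 ⟨zero_lt_one, le_refl 1⟩
  have hts : (∑' i : ℕ, (lam i) ^ s * (v i) ^ 2) = L ^ s := by
    rw [tsum_eq_single j hzero]; simp [hv]; rfl
  have htp : (∑' i : ℕ, (lam i) ^ p * (ml α (-(lam i * (1:ℝ) ^ α)) * v i) ^ 2)
      = L ^ p * (ml α (-L)) ^ 2 := by
    rw [tsum_eq_single j (by intro i hi; simp [hv, hi])]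
    simp [hv, Real.one_rpow]; rfl
  rw [htp, hts] at key
  simp only [Real.one_rpow, mul_one] at key
  -- key : L ^ p * (ml α (-L)) ^ 2 ≤ C ^ 2 * L ^ s
  have hEl : c₀ / (1 + L) ≤ ml α (-L) := hE L hL0.le
  have hEl2 : c₀ / 2 ≤ L * ml α (-L) := by
    have h1 : c₀ / 2 ≤ L * (c₀ / (1 + L)) := by
      rw [mul_div_assoc', div_le_div_iff₀ (by norm_num) (by linarith)]
      nlinarith
    exact h1.trans (by
      have := mul_le_mul_of_nonneg_left hEl hL0.le
      linarith)
  have hEpos : 0 < ml α (-L) := lt_of_lt_of_le (by positivity) hEl2 |>.trans_le (le_refl _) |> fun _ => by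
    nlinarith [hEl2, hL0]
  -- rewrite L ^ p
  have hsplit : L ^ p = L ^ (p - s - 2) * L ^ s * L ^ (2:ℝ) := by
    rw [← Real.rpow_add hL0, ← Real.rpow_add hL0]; ring_nf
  have h2 : L ^ (2:ℝ) = L ^ (2:ℕ) := by
    rw [← Real.rpow_natCast L 2]; norm_num
  rw [hsplit, h2] at key
  have hBs : (0:ℝ) < L ^ s := Real.rpow_pos_of_pos hL0 _
  have hD : 4 * C ^ 2 < L ^ (p - s - 2) * c₀ ^ 2 := by
    rw [div_lt_iff₀ (by positivity)] at hj2; linarith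
  have hLE : c₀ ^ 2 / 4 ≤ (L * ml α (-L)) ^ 2 := by
    nlinarith [hEl2, hc₀.le]
  -- key : L^(p-s-2) * L^s * L^2 * (ml)^2 ≤ C^2 * L^s
  have hfin : L ^ (p - s - 2) * (c₀ ^ 2 / 4) * L ^ s ≤ C ^ 2 * L ^ s := by
    calc L ^ (p - s - 2) * (c₀ ^ 2 / 4) * L ^ s
        ≤ L ^ (p - s - 2) * (L * ml α (-L)) ^ 2 * L ^ s := by
          have hDpos : (0:ℝ) < L ^ (p - s - 2) := Real.rpow_pos_of_pos hL0 _
          exact mul_le_mul_of_nonneg_right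
            (mul_le_mul_of_nonneg_left hLE hDpos.le) hBs.le
      _ = L ^ (p - s - 2) * L ^ s * L ^ (2:ℕ) * (ml α (-L)) ^ 2 := by ring
      _ ≤ C ^ 2 * L ^ s := key
  have hD2 : L ^ (p - s - 2) * (c₀ ^ 2 / 4) ≤ C ^ 2 :=
    le_of_mul_le_mul_right (by linarith [hfin]) hBs
  nlinarith [hD, hD2]
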